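/- Let τ be a permutation consisting of a single cycle on a finite set I with n ≥ 2 elements, and let π be a permutation of I noncrossing on τ such that no cycle of π contains both a and τ(a) for any a ∈ I. Then π has at least two fixed points. -/
import Mathlib


namespace AnnNC

/-- The orbit ("same cycle") setoid of a permutation. -/
def orbitSetoid {α : Type*} (σ : Equiv.Perm α) : Setoid α :=
  ⟨σ.SameCycle, ⟨fun x => Equiv.Perm.SameCycle.refl σ x,
    fun h => h.symm, fun h h' => h.trans h'⟩⟩

/-- Number of orbits (cycles, counting fixed points) of a permutation. -/
noncomputable def numOrbits {α : Type*} (σ : Equiv.Perm α) : ℕ :=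
  Nat.card (Quotient (orbitSetoid σ))

/-- Number of blocks of the join `Π(σ) ∨ Π(ρ)` of the orbit partitions. -/
noncomputable def numJoin {α : Type*} (σ ρ : Equiv.Perm α) : ℕ :=
  Nat.card (Quotient (orbitSetoid σ ⊔ orbitSetoid ρ))

/-- Euler characteristic `χ_ρ(π) = #(ρ) + #(π) + #(π⁻¹ρ) − n`. -/
noncomputable def euler {α : Type*} (ρ π : Equiv.Perm α) : ℤ :=
  (numOrbits ρ : ℤ) + (numOrbits π : ℤ) + (numOrbits (π⁻¹ * ρ) : ℤ) - (Nat.card α : ℤ)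

/-- `π` is noncrossing on `ρ`. -/
def IsNoncrossingOn {α : Type*} (π ρ : Equiv.Perm α) : Prop :=
  euler ρ π = 2 * (numJoin π ρ : ℤ)

/-- Euler characteristic of permutations regarded as permutations of a subset `S`
(for permutations fixing the complement of `S` pointwise). -/
noncomputable def eulerOn {α : Type*} (S : Set α) (ρ π : Equiv.Perm α) : ℤ :=
  ((numOrbits ρ : ℤ) - (Nat.card (Sᶜ : Set α) : ℤ)) +
    ((numOrbits π : ℤ) - (Nat.card (Sᶜ : Set α) : ℤ)) +
    ((numOrbits (π⁻¹ * ρ) : ℤ) - (Nat.card (Sᶜ : Set α) : ℤ)) - (Nat.card (S : Set α) : ℤ)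

/-- `π` is noncrossing on `ρ`, both regarded as permutations of the subset `S`. -/
def IsNoncrossingWithin {α : Type*} (S : Set α) (π ρ : Equiv.Perm α) : Prop :=
  eulerOn S ρ π = 2 * ((numJoin π ρ : ℤ) - (Nat.card (Sᶜ : Set α) : ℤ))

/-- `τ_{p,q} = (1,…,p)(p+1,…,p+q)` as a permutation of `Fin (p+q)`. -/
def tauPQ (p q : ℕ) : Equiv.Perm (Fin (p + q)) :=
  Equiv.permCongr finSumFinEquiv (Equiv.sumCongr (finRotate p) (finRotate q))

/-- Disc-noncrossing permutations: noncrossing on `τ_{p,q}` and the orbit partition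
refines that of `τ_{p,q}`. -/
def SDiscNC (p q : ℕ) : Set (Equiv.Perm (Fin (p + q))) :=
  {π | IsNoncrossingOn π (tauPQ p q) ∧
    ∀ x y : Fin (p + q), π.SameCycle x y → ((x : ℕ) < p ↔ (y : ℕ) < p)}

/-- Annular-noncrossing permutations: noncrossing on `τ_{p,q}` with at least one bridge. -/
def SAnnNC (p q : ℕ) : Set (Equiv.Perm (Fin (p + q))) :=
  {π | IsNoncrossingOn π (tauPQ p q) ∧
    ∃ a b : Fin (p + q), π.SameCycle a b ∧ (a : ℕ) < p ∧ p ≤ (b : ℕ)}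

/-- The set of elements lying in bridges of `σ`. -/
def BridgeSet (p q : ℕ) (σ : Equiv.Perm (Fin (p + q))) : Set (Fin (p + q)) :=
  {x | ∃ a b : Fin (p + q), σ.SameCycle x a ∧ σ.SameCycle x b ∧ (a : ℕ) < p ∧ p ≤ (b : ℕ)}

/-- `π₀` is the permutation induced by `π` on the partition `Π(τ_{p,q})`
(the first–return map of `π` to each of the two sides). -/
def IsPiZero (p q : ℕ) (π π₀ : Equiv.Perm (Fin (p + q))) : Prop :=
  ∀ a : Fin (p + q), ∃ k : ℕ, 0 < k ∧ π₀ a = (π ^ k) a ∧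
    (((a : ℕ) < p) ↔ (((π ^ k) a : ℕ) < p)) ∧
    ∀ j : ℕ, 0 < j → j < k → ¬ (((a : ℕ) < p) ↔ (((π ^ j) a : ℕ) < p))

/-- The order `π ⪯ ρ` for (unhatted) permutations: the orbit partition of `π` refines
that of `ρ` and `π` is noncrossing on `ρ`. -/
def permLe {α : Type*} (π ρ : Equiv.Perm α) : Prop :=
  (∀ x y : α, π.SameCycle x y → ρ.SameCycle x y) ∧ IsNoncrossingOn π ρ

/-- The order relation `π ⪯ ρ̂` in `S_nc-sd(p,q)`, i.e. `Kr(ρ) ⪯ Kr(π)`. -/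
def leAnnHat (p q : ℕ) (π ρ : Equiv.Perm (Fin (p + q))) : Prop :=
  permLe (ρ⁻¹ * tauPQ p q) (π⁻¹ * tauPQ p q)

/-- `σ` is the permutation induced by `π` on the subset `J` (first-return map),
extended by the identity off `J`. -/
def IsInducedOn {α : Type*} (π σ : Equiv.Perm α) (J : Set α) : Prop :=
  (∀ a ∉ J, σ a = a) ∧
  ∀ a ∈ J, ∃ k : ℕ, 0 < k ∧ σ a = (π ^ k) a ∧ (π ^ k) a ∈ J ∧
    ∀ j : ℕ, 0 < j → j < k → (π ^ j) a ∉ J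

/-- The size of an orbit of a permutation. -/
noncomputable def orbitSize {α : Type*} (σ : Equiv.Perm α) (c : Quotient (orbitSetoid σ)) : ℕ :=
  Nat.card {x : α // Quotient.mk (orbitSetoid σ) x = c}

/-- `∏_{U ∈ Π(σ)} (−1)^{|U|−1} C_{|U|−1}`. -/
noncomputable def catProd {α : Type*} (σ : Equiv.Perm α) : ℤ :=
  ∏ᶠ c : Quotient (orbitSetoid σ),
    ((-1 : ℤ) ^ (orbitSize σ c - 1) * (catalan (orbitSize σ c - 1) : ℤ))

/-- The carrier of the poset `S_nc-sd(p,q)`: pairs (permutation, hatted?). -/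
def NCSDSet (p q : ℕ) : Set (Equiv.Perm (Fin (p + q)) × Bool) :=
  {z | (z.2 = false ∧ (z.1 ∈ SDiscNC p q ∪ SAnnNC p q)) ∨ (z.2 = true ∧ z.1 ∈ SDiscNC p q)}

/-- The partial order of `S_nc-sd(p,q)`. -/
def ncsdLe (p q : ℕ) (a b : Equiv.Perm (Fin (p + q)) × Bool) : Prop :=
  (a.2 = false ∧ b.2 = false ∧ permLe a.1 b.1) ∨
  (b.2 = true ∧ permLe (b.1⁻¹ * tauPQ p q) (a.1⁻¹ * tauPQ p q))

end AnnNC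

open Finset in
lemma aux_count {α : Type*} [Fintype α] (s : Setoid α) (F : Finset α)
    (hinj : ∀ a ∈ F, ∀ b ∈ F, Quotient.mk s a = Quotient.mk s b → a = b)
    (hbig : ∀ a : α, a ∉ F → ∃ b, b ≠ a ∧ Quotient.mk s b = Quotient.mk s a) :
    2 * Nat.card (Quotient s) ≤ Fintype.card α + F.card := by
  classical
  rw [Nat.card_eq_fintype_card]
  have hfib : Fintype.card α
      = ∑ c : Quotient s, (univ.filter fun a => Quotient.mk s a = c).card := by
    rw [Fintype.card, Finset.card_eq_sum_card_fiberwise (f := Quotient.mk s)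
      (t := univ) (fun x _ => mem_univ _)]
  have himg : (F.image (Quotient.mk s)).card = F.card :=
    Finset.card_image_of_injOn fun a ha b hb h => hinj a ha b hb h
  have key : ∀ c : Quotient s,
      2 ≤ (univ.filter fun a => Quotient.mk s a = c).card
        + (if c ∈ F.image (Quotient.mk s) then 1 else 0) := by
    intro c
    obtain ⟨a, ha⟩ := Quotient.exists_rep c
    by_cases hc : c ∈ F.image (Quotient.mk s)
    · simp only [hc, if_true]
      have : 0 < (univ.filter fun x => Quotient.mk s x = c).card :=
        Finset.card_pos.mpr ⟨a, by simp [ha]⟩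
      omega
    · simp only [hc, if_false, add_zero]
      have haF : a ∉ F := fun h => hc (Finset.mem_image.mpr ⟨a, h, ha⟩)
      obtain ⟨b, hba, hb⟩ := hbig a haF
      exact Finset.one_lt_card.mpr ⟨a, by simp [ha], b, by simp [hb, ha], fun h => hba h.symm⟩
  have hsum : ∑ c : Quotient s, (if c ∈ F.image (Quotient.mk s) then (1:ℕ) else 0)
      = F.card := by
    rw [Finset.sum_ite_mem, Finset.univ_inter]
    simp [himg]
  calc 2 * Fintype.card (Quotient s) = ∑ _c : Quotient s, 2 := by
        rw [Finset.sum_const, smul_eq_mul, mul_comm, Fintype.card]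
    _ ≤ ∑ c : Quotient s, ((univ.filter fun a => Quotient.mk s a = c).card
          + (if c ∈ F.image (Quotient.mk s) then 1 else 0)) :=
        Finset.sum_le_sum fun c _ => key c
    _ = Fintype.card α + F.card := by rw [Finset.sum_add_distrib, ← hfib, hsum]

open AnnNC in
/-- if `τ` is a single cycle on a finite set with at least two elements and
`π` is noncrossing on `τ` with no cycle of `π` containing both `a` and `τ(a)`, then `π` has
at least two fixed points. -/
theorem stmt11 {α : Type*} (hcard : 2 ≤ Nat.card α) (τ π : Equiv.Perm α)
    (hτ : ∀ x y : α, τ.SameCycle x y)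
    (hnc : IsNoncrossingOn π τ)
    (hsep : ∀ a : α, ¬ π.SameCycle a (τ a)) :
    ∃ a b : α, a ≠ b ∧ π a = a ∧ π b = b := by
  classical
  have hfin : Finite α := Nat.finite_of_card_ne_zero (by omega)
  haveI : Fintype α := Fintype.ofFinite α
  have hne : Nonempty α := (Nat.card_pos_iff.mp (by omega)).1
  -- numOrbits τ = 1
  have hτ1 : numOrbits τ = 1 := by
    rw [numOrbits, Nat.card_eq_one_iff_unique]
    constructor
    · constructor
      intro x y
      induction x using Quotient.ind
      induction y using Quotient.ind
      exact Quotient.sound (hτ _ _)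
    · exact ⟨Quotient.mk _ hne.some⟩
  -- numJoin π τ = 1
  have hj1 : numJoin π τ = 1 := by
    rw [numJoin, Nat.card_eq_one_iff_unique]
    constructor
    · constructor
      intro x y
      induction x using Quotient.ind
      induction y using Quotient.ind
      exact Quotient.sound
        ((le_sup_right : orbitSetoid τ ≤ orbitSetoid π ⊔ orbitSetoid τ) (hτ _ _))
    · exact ⟨Quotient.mk _ hne.some⟩
  have heuler : (numOrbits π : ℤ) + (numOrbits (π⁻¹ * τ) : ℤ) = (Nat.card α : ℤ) + 1 := by
    have := hnc
    rw [IsNoncrossingOn, euler, hτ1, hj1] at this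
    push_cast at this
    linarith
  -- π⁻¹ * τ has no fixed points
  have hnofix : ∀ a : α, (π⁻¹ * τ) a ≠ a := by
    intro a h
    apply hsep a
    have : τ a = π a := by
      have := congrArg π h
      simpa using this
    exact ⟨1, by simpa using this.symm⟩
  -- Kreweras bound: 2 * numOrbits (π⁻¹τ) ≤ n
  have hkrew : 2 * numOrbits (π⁻¹ * τ) ≤ Nat.card α := by
    have := aux_count (orbitSetoid (π⁻¹ * τ)) ∅ (by simp)
      (fun a _ => ⟨(π⁻¹ * τ) a, hnofix a, Quotient.sound ⟨-1, by simp⟩⟩)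
    simpa [numOrbits, Nat.card_eq_fintype_card] using this
  -- fixed point set
  set F : Finset α := Finset.univ.filter fun a => π a = a with hF
  have hfixorbit : ∀ a : α, π a = a → ∀ b : α, π.SameCycle a b → b = a := by
    intro a ha b ⟨i, hi⟩
    rw [← hi]
    exact (Equiv.Perm.zpow_apply_eq_self_of_apply_eq_self ha i)
  have hπbound : 2 * numOrbits π ≤ Nat.card α + F.card := by
    have := aux_count (orbitSetoid π) F
      (fun a ha b hb h => by
        have := Quotient.exact h
        exact (hfixorbit a (by simpa [hF] using ha) b this).symm)
      (fun a ha => ⟨π a, fun h => ha (by simpa [hF] using h),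
        Quotient.sound ⟨-1, by simp⟩⟩)
    simpa [numOrbits, Nat.card_eq_fintype_card] using this
  have hF2 : 2 ≤ F.card := by
    have h1 : (2 : ℤ) * (numOrbits π : ℤ) ≤ (Nat.card α : ℤ) + (F.card : ℤ) := by
      exact_mod_cast hπbound
    have h2 : (2 : ℤ) * (numOrbits (π⁻¹ * τ) : ℤ) ≤ (Nat.card α : ℤ) := by
      exact_mod_cast hkrew
    have : (2 : ℤ) ≤ (F.card : ℤ) := by linarith
    exact_mod_cast this
  obtain ⟨a, ha, b, hb, hab⟩ := Finset.one_lt_card.mp hF2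
  exact ⟨a, b, hab, by simpa [hF] using ha, by simpa [hF] using hb⟩
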